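/- Let G = (V, E) be a digraph, let u ≠ v be vertices with no arc between u and v in either direction, and let A, B ⊆ V be sets with A ∪ B = V, A ∩ B = {u, v}, and no arcs in either direction between A∖{u,v} and B∖{u,v}. Let G1 be the digraph on A whose arcs are the arcs of E between vertices of A together with the extra arc (u, v), and let G2 be the digraph on B whose arcs are the arcs of E between vertices of B together with the extra arc (v, u). Suppose O1 is a directed cycle of G1 that passes through the arc (u, v) and is induced and undominated in G1, and O2 is a directed cycle of G2 that passes through the arc (v, u) and is induced and undominated in G2. Then the directed cycle of G obtained by deleting the arcs (u, v) and (v, u) and concatenating O1 and O2 (following O1 from v to u inside A and then O2 from u to v inside B) is an induced and undominated directed cycle of G. -/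
import Mathlib

/-- A directed cycle of length `k` in the digraph `E`. -/
def IsDirCycle {V : Type*} (E : V → V → Prop) (k : ℕ) (f : ZMod k → V) : Prop :=
  3 ≤ k ∧ Function.Injective f ∧ ∀ t : ZMod k, E (f t) (f (t + 1))

/-- The cycle `f` is induced: the only arcs between vertices of the cycle are the
consecutive arcs `f t → f (t+1)`. -/
def IsInducedDirCycle {V : Type*} (E : V → V → Prop) (k : ℕ) (f : ZMod k → V) : Prop :=
  ∀ s t : ZMod k, E (f s) (f t) → t = s + 1

/-- The cycle `f` is undominated: no vertex `u` outside the cycle has arcs to two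
distinct vertices of the cycle. -/
def IsUndominatedDirCycle {V : Type*} (E : V → V → Prop) (k : ℕ) (f : ZMod k → V) : Prop :=
  ∀ u : V, u ∉ Set.range f → ¬ ∃ s t : ZMod k, f s ≠ f t ∧ E u (f s) ∧ E u (f t)

lemma natCast_inj_of_lt' {n a b : ℕ} (ha : a < n) (hb : b < n) (h : (a : ZMod n) = b) : a = b := by
  have := congrArg ZMod.val h
  rwa [ZMod.val_natCast_of_lt ha, ZMod.val_natCast_of_lt hb] at this

lemma natCast_eq_zero_small {n a : ℕ} (ha : a < n) (h : (a : ZMod n) = 0) : a = 0 := by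
  rw [ZMod.natCast_eq_zero_iff] at h
  rcases Nat.eq_zero_or_pos a with h'|h'
  · exact h'
  · exact absurd (Nat.le_of_dvd h' h) (by omega)

/-- Stitching two undominated induced cycles at a separating pair `{u, v}`:
if `G₁` (the part of `G` on `A`, plus an extra arc `(u,v)`) has an undominated
induced cycle `f₁` through `(u,v)`, and `G₂` (the part on `B`, plus an extra arc
`(v,u)`) has an undominated induced cycle `f₂` through `(v,u)`, then deleting the
two extra arcs and concatenating yields an undominated induced cycle of `G`,
namely a cycle whose vertices are those of `f₁` and `f₂` and whose arcs are the
arcs of `f₁` and `f₂` other than `(u,v)` and `(v,u)`. -/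
theorem stitch_two_undominated_induced_cycles
    {V : Type*} (E : V → V → Prop) (u v : V) (huv : u ≠ v)
    (hns1 : ¬ E u v) (hns2 : ¬ E v u)
    (A B : Set V) (hcover : A ∪ B = Set.univ) (hinter : A ∩ B = {u, v})
    (hsep : ∀ a ∈ A \ {u, v}, ∀ b ∈ B \ {u, v}, ¬ E a b ∧ ¬ E b a)
    -- the two augmented digraphs
    (E1 : A → A → Prop) (hE1 : ∀ a b : A, E1 a b ↔ (E a b ∨ ((a : V) = u ∧ (b : V) = v)))
    (E2 : B → B → Prop) (hE2 : ∀ a b : B, E2 a b ↔ (E a b ∨ ((a : V) = v ∧ (b : V) = u)))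
    (k1 k2 : ℕ) (f1 : ZMod k1 → A) (f2 : ZMod k2 → B)
    (hc1 : IsDirCycle E1 k1 f1) (hi1 : IsInducedDirCycle E1 k1 f1)
    (hd1 : IsUndominatedDirCycle E1 k1 f1)
    (hpass1 : ∃ t : ZMod k1, (f1 t : V) = u ∧ (f1 (t + 1) : V) = v)
    (hc2 : IsDirCycle E2 k2 f2) (hi2 : IsInducedDirCycle E2 k2 f2)
    (hd2 : IsUndominatedDirCycle E2 k2 f2)
    (hpass2 : ∃ t : ZMod k2, (f2 t : V) = v ∧ (f2 (t + 1) : V) = u) :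
    ∃ (k : ℕ) (f : ZMod k → V),
      IsDirCycle E k f ∧ IsInducedDirCycle E k f ∧ IsUndominatedDirCycle E k f ∧
      Set.range (fun t => f t) =
        ((fun a : A => (a : V)) '' Set.range f1) ∪ ((fun b : B => (b : V)) '' Set.range f2) ∧
      {p : V × V | ∃ t : ZMod k, p = (f t, f (t + 1))} =
        ({p : V × V | ∃ t : ZMod k1, p = ((f1 t : V), (f1 (t + 1) : V))} \ {(u, v)}) ∪
        ({p : V × V | ∃ t : ZMod k2, p = ((f2 t : V), (f2 (t + 1) : V))} \ {(v, u)}) := by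
  obtain ⟨hk1, hf1inj, hf1arc⟩ := hc1
  obtain ⟨hk2, hf2inj, hf2arc⟩ := hc2
  obtain ⟨t1, ht1u, ht1v⟩ := hpass1
  obtain ⟨t2, ht2v, ht2u⟩ := hpass2
  haveI h01 : NeZero k1 := ⟨by omega⟩
  haveI h02 : NeZero k2 := ⟨by omega⟩
  set k := k1 + k2 - 2 with hkdef
  haveI h0 : NeZero k := ⟨by omega⟩
  -- membership of u, v
  have huA : u ∈ A := by have : u ∈ A ∩ B := by rw [hinter]; simp
                         exact this.1
  have huB : u ∈ B := by have : u ∈ A ∩ B := by rw [hinter]; simp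
                         exact this.2
  have hvA : v ∈ A := by have : v ∈ A ∩ B := by rw [hinter]; simp
                         exact this.1
  have hvB : v ∈ B := by have : v ∈ A ∩ B := by rw [hinter]; simp
                         exact this.2
  have hAB : ∀ x, x ∈ A → x ∈ B → x = u ∨ x = v := by
    intro x h1 h2
    have : x ∈ A ∩ B := ⟨h1, h2⟩
    rw [hinter] at this; simpa using this
  -- characterizations of u, v on the cycles
  have hval1u : ∀ s : ZMod k1, (f1 s : V) = u ↔ s = t1 := fun s =>
    ⟨fun h => hf1inj (Subtype.coe_injective (h.trans ht1u.symm)), fun h => h ▸ ht1u⟩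
  have hval1v : ∀ s : ZMod k1, (f1 s : V) = v ↔ s = t1 + 1 := fun s =>
    ⟨fun h => hf1inj (Subtype.coe_injective (h.trans ht1v.symm)), fun h => h ▸ ht1v⟩
  have hval2v : ∀ s : ZMod k2, (f2 s : V) = v ↔ s = t2 := fun s =>
    ⟨fun h => hf2inj (Subtype.coe_injective (h.trans ht2v.symm)), fun h => h ▸ ht2v⟩
  have hval2u : ∀ s : ZMod k2, (f2 s : V) = u ↔ s = t2 + 1 := fun s =>
    ⟨fun h => hf2inj (Subtype.coe_injective (h.trans ht2u.symm)), fun h => h ▸ ht2u⟩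
  -- arcs of E from arcs of E1, E2 away from the special arc
  have harc1 : ∀ σ : ZMod k1, σ ≠ t1 → E (f1 σ) (f1 (σ+1)) := fun σ h =>
    ((hE1 _ _).1 (hf1arc σ)).resolve_right (fun hc => h ((hval1u σ).1 hc.1))
  have harc2 : ∀ τ : ZMod k2, τ ≠ t2 → E (f2 τ) (f2 (τ+1)) := fun τ h =>
    ((hE2 _ _).1 (hf2arc τ)).resolve_right (fun hc => h ((hval2v τ).1 hc.1))
  -- induced transferred to E
  have hind1 : ∀ a b : ZMod k1, E (f1 a) (f1 b) → b = a + 1 := fun a b h =>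
    hi1 a b ((hE1 _ _).2 (Or.inl h))
  have hind2 : ∀ a b : ZMod k2, E (f2 a) (f2 b) → b = a + 1 := fun a b h =>
    hi2 a b ((hE2 _ _).2 (Or.inl h))
  -- non-u / only-v facts for offset parametrization
  have hne1 : ∀ m : ℕ, m < k1 - 1 → t1 + 1 + (m : ZMod k1) ≠ t1 := by
    intro m hm h
    have h2 : ((m+1 : ℕ) : ZMod k1) = 0 := by push_cast; linear_combination h
    have := natCast_eq_zero_small (n := k1) (by omega) h2
    omega
  have hne2 : ∀ j : ℕ, j < k2 - 1 → t2 + 1 + (j : ZMod k2) ≠ t2 := by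
    intro j hj h
    have h2 : ((j+1 : ℕ) : ZMod k2) = 0 := by push_cast; linear_combination h
    have := natCast_eq_zero_small (n := k2) (by omega) h2
    omega
  have hnu1 : ∀ m : ℕ, m < k1 - 1 → (f1 (t1+1+(m:ZMod k1)) : V) ≠ u := fun m hm h =>
    hne1 m hm ((hval1u _).1 h)
  have hnv2 : ∀ j : ℕ, j < k2 - 1 → (f2 (t2+1+(j:ZMod k2)) : V) ≠ v := fun j hj h =>
    hne2 j hj ((hval2v _).1 h)
  have hvv1 : ∀ m : ℕ, m < k1 - 1 → (f1 (t1+1+(m:ZMod k1)) : V) = v → m = 0 := by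
    intro m hm h
    have h1 := (hval1v _).1 h
    have h2 : ((m : ℕ) : ZMod k1) = 0 := by linear_combination h1
    exact natCast_eq_zero_small (by omega) h2
  have hvu2 : ∀ j : ℕ, j < k2 - 1 → (f2 (t2+1+(j:ZMod k2)) : V) = u → j = 0 := by
    intro j hj h
    have h1 := (hval2u _).1 h
    have h2 : ((j : ℕ) : ZMod k2) = 0 := by linear_combination h1
    exact natCast_eq_zero_small (by omega) h2
  have hinj1 : ∀ m m' : ℕ, m < k1 - 1 → m' < k1 - 1 →
      (f1 (t1+1+(m:ZMod k1)) : V) = (f1 (t1+1+(m':ZMod k1)) : V) → m = m' := by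
    intro m m' hm hm' h
    have h2 := hf1inj (Subtype.coe_injective h)
    have h3 : ((m : ℕ) : ZMod k1) = ((m' : ℕ) : ZMod k1) := by linear_combination h2
    exact natCast_inj_of_lt' (by omega) (by omega) h3
  have hinj2 : ∀ j j' : ℕ, j < k2 - 1 → j' < k2 - 1 →
      (f2 (t2+1+(j:ZMod k2)) : V) = (f2 (t2+1+(j':ZMod k2)) : V) → j = j' := by
    intro j j' hj hj' h
    have h2 := hf2inj (Subtype.coe_injective h)
    have h3 : ((j : ℕ) : ZMod k2) = ((j' : ℕ) : ZMod k2) := by linear_combination h2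
    exact natCast_inj_of_lt' (by omega) (by omega) h3
  -- the stitched cycle
  set f : ZMod k → V := fun x =>
    if x.val < k1 - 1 then (f1 (t1 + 1 + (x.val : ZMod k1)) : V)
    else (f2 (t2 + 1 + ((x.val - (k1-1) : ℕ) : ZMod k2)) : V) with hfdef
  have hfl : ∀ x : ZMod k, x.val < k1 - 1 →
      f x = (f1 (t1 + 1 + (x.val : ZMod k1)) : V) := by
    intro x h; simp only [hfdef]; rw [if_pos h]
  have hfr : ∀ x : ZMod k, ¬ x.val < k1 - 1 →
      f x = (f2 (t2 + 1 + ((x.val - (k1-1) : ℕ) : ZMod k2)) : V) := by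
    intro x h; simp only [hfdef]; rw [if_neg h]
  have hxval : ∀ x : ZMod k, ((x.val : ℕ) : ZMod k) = x := fun x => ZMod.natCast_rightInverse x
  have hsucc : ∀ x : ZMod k, x + 1 = ((x.val + 1 : ℕ) : ZMod k) := by
    intro x
    conv_lhs => rw [← hxval x]
    push_cast; ring
  have hfu : f (((k1-1 : ℕ) : ZMod k)) = u := by
    have hv : (((k1-1:ℕ) : ZMod k)).val = k1-1 := ZMod.val_natCast_of_lt (by omega)
    rw [hfr _ (by rw [hv]; omega), hv, Nat.sub_self]
    push_cast
    rw [add_zero]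
    exact ht2u
  have hfv : f 0 = v := by
    have hv : ((0:ZMod k)).val = 0 := ZMod.val_zero
    rw [hfl _ (by rw [hv]; omega), hv]
    push_cast
    rw [add_zero]
    exact ht1v
  have hsv : ∀ x : ZMod k, x.val < k := fun x => x.val_lt
  have hcast1 : ((k1-1 : ℕ) : ZMod k1) = -1 := by
    rw [Nat.cast_sub (by omega : 1 ≤ k1), ZMod.natCast_self]; ring
  have hcast2 : ((k2-1 : ℕ) : ZMod k2) = -1 := by
    rw [Nat.cast_sub (by omega : 1 ≤ k2), ZMod.natCast_self]; ring
  -- the main structural lemma: where the successor lands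
  have harcs : ∀ x : ZMod k,
      (x.val < k1 - 1 ∧ f (x+1) = (f1 ((t1 + 1 + (x.val : ZMod k1)) + 1) : V)) ∨
      (k1 - 1 ≤ x.val ∧ f (x+1) = (f2 ((t2 + 1 + ((x.val - (k1-1) : ℕ) : ZMod k2)) + 1) : V)) := by
    intro x
    have hxlt := hsv x
    rcases lt_trichotomy (x.val + 1) (k1 - 1) with h1 | h1 | h1
    · -- stay in first part
      left
      refine ⟨by omega, ?_⟩
      have hv1 : (x+1).val = x.val + 1 := by
        rw [hsucc x, ZMod.val_natCast_of_lt (by omega)]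
      rw [hfl (x+1) (by omega), hv1]
      congr 2
      push_cast; ring
    · -- cross from A-side into u
      left
      refine ⟨by omega, ?_⟩
      have hv1 : (x+1).val = x.val + 1 := by
        rw [hsucc x, ZMod.val_natCast_of_lt (by omega)]
      have heq : (t1 + 1 + ((x.val : ℕ) : ZMod k1)) + 1 = t1 := by
        have hx2 : x.val = k1 - 2 := by omega
        rw [hx2]
        have : ((k1-2 : ℕ) : ZMod k1) = -2 := by
          rw [Nat.cast_sub (by omega : 2 ≤ k1), ZMod.natCast_self]; push_cast; ring
        rw [this]; ring
      rw [heq, hfr (x+1) (by omega), hv1, ht1u]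
      have : x.val + 1 - (k1 - 1) = 0 := by omega
      rw [this]
      push_cast
      rw [add_zero, ht2u]
    · -- in second part
      by_cases h2 : x.val = k - 1
      · -- wrap around
        right
        refine ⟨by omega, ?_⟩
        have hx1 : x + 1 = 0 := by
          rw [hsucc x, h2]
          have : (k - 1 + 1 : ℕ) = k := by omega
          rw [this, ZMod.natCast_self]
        have heq : (t2 + 1 + ((x.val - (k1-1) : ℕ) : ZMod k2)) + 1 = t2 := by
          have hx2 : x.val - (k1 - 1) = k2 - 2 := by omega
          rw [hx2]
          have : ((k2-2 : ℕ) : ZMod k2) = -2 := by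
            rw [Nat.cast_sub (by omega : 2 ≤ k2), ZMod.natCast_self]; push_cast; ring
          rw [this]; ring
        rw [heq, hx1, hfv, ht2v]
      · -- stay in second part
        right
        refine ⟨by omega, ?_⟩
        have hv1 : (x+1).val = x.val + 1 := by
          rw [hsucc x, ZMod.val_natCast_of_lt (by omega)]
        rw [hfr (x+1) (by omega), hv1]
        congr 2
        have : x.val + 1 - (k1 - 1) = (x.val - (k1-1)) + 1 := by omega
        rw [this]
        push_cast; ring
  -- every non-special arc of f1 appears in f
  have hmem1' : ∀ σ : ZMod k1, σ ≠ t1 →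
      ∃ x : ZMod k, f x = (f1 σ : V) ∧ f (x+1) = (f1 (σ+1) : V) := by
    intro σ hσ
    set m := (σ - (t1+1)).val with hmdef
    have hm : ((m : ℕ) : ZMod k1) = σ - (t1+1) := ZMod.natCast_rightInverse _
    have hmlt : m < k1 := ZMod.val_lt _
    have hmne : m ≠ k1 - 1 := by
      intro h
      apply hσ
      have h2 : σ - (t1+1) = -1 := by rw [← hm, h, hcast1]
      linear_combination h2
    have hmlt' : m < k1 - 1 := by omega
    refine ⟨((m : ℕ) : ZMod k), ?_, ?_⟩
    · have hval : (((m:ℕ)) : ZMod k).val = m := ZMod.val_natCast_of_lt (by omega)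
      rw [hfl _ (by rw [hval]; omega), hval]
      have : t1 + 1 + ((m:ℕ) : ZMod k1) = σ := by rw [hm]; ring
      rw [this]
    · have hval : (((m:ℕ)) : ZMod k).val = m := ZMod.val_natCast_of_lt (by omega)
      rcases harcs ((m:ℕ) : ZMod k) with ⟨_, he⟩ | ⟨h', _⟩
      · rw [he, hval]
        have : t1 + 1 + ((m:ℕ) : ZMod k1) = σ := by rw [hm]; ring
        rw [this]
      · rw [hval] at h'; omega
  have hmem2' : ∀ τ : ZMod k2, τ ≠ t2 →
      ∃ x : ZMod k, f x = (f2 τ : V) ∧ f (x+1) = (f2 (τ+1) : V) := by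
    intro τ hτ
    set j := (τ - (t2+1)).val with hjdef
    have hj : ((j : ℕ) : ZMod k2) = τ - (t2+1) := ZMod.natCast_rightInverse _
    have hjlt : j < k2 := ZMod.val_lt _
    have hjne : j ≠ k2 - 1 := by
      intro h
      apply hτ
      have h2 : τ - (t2+1) = -1 := by rw [← hj, h, hcast2]
      linear_combination h2
    have hjlt' : j < k2 - 1 := by omega
    have hveq : τ = t2 + 1 + ((j:ℕ) : ZMod k2) := by rw [hj]; ring
    refine ⟨((k1 - 1 + j : ℕ) : ZMod k), ?_, ?_⟩
    · have hval : (((k1-1+j : ℕ)) : ZMod k).val = k1-1+j := ZMod.val_natCast_of_lt (by omega)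
      rw [hfr _ (by rw [hval]; omega), hval]
      have : k1 - 1 + j - (k1 - 1) = j := by omega
      rw [this, ← hveq]
    · have hval : (((k1-1+j : ℕ)) : ZMod k).val = k1-1+j := ZMod.val_natCast_of_lt (by omega)
      rcases harcs ((k1-1+j : ℕ) : ZMod k) with ⟨h', _⟩ | ⟨_, he⟩
      · rw [hval] at h'; omega
      · rw [he, hval]
        have : k1 - 1 + j - (k1 - 1) = j := by omega
        rw [this, ← hveq]
  -- every vertex of f1, f2 appears in f
  have hmem1 : ∀ σ : ZMod k1, ∃ x : ZMod k, f x = (f1 σ : V) := by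
    intro σ
    by_cases hσ : σ = t1
    · exact ⟨_, hfu.trans (by rw [hσ, ht1u])⟩
    · obtain ⟨x, hx, _⟩ := hmem1' σ hσ
      exact ⟨x, hx⟩
  have hmem2 : ∀ τ : ZMod k2, ∃ x : ZMod k, f x = (f2 τ : V) := by
    intro τ
    by_cases hτ : τ = t2
    · exact ⟨0, hfv.trans (by rw [hτ, ht2v])⟩
    · obtain ⟨x, hx, _⟩ := hmem2' τ hτ
      exact ⟨x, hx⟩
  -- successor identification in ZMod k
  have hgoal : ∀ s t : ZMod k, t.val = s.val + 1 → t = s + 1 := by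
    intro s t h
    rw [hsucc s, ← hxval t, h]
  have hgoal0 : ∀ s t : ZMod k, s.val = k - 1 → t.val = 0 → t = s + 1 := by
    intro s t hs ht
    rw [hsucc s, hs, ← hxval t, ht]
    have : (k - 1 + 1 : ℕ) = k := by omega
    rw [this, ZMod.natCast_self]
    simp
  refine ⟨k, f, ⟨by omega, ?_, ?_⟩, ?_, ?_, ?_, ?_⟩
  · -- injectivity
    intro x y h
    by_cases hx : x.val < k1 - 1 <;> by_cases hy : y.val < k1 - 1
    · rw [hfl x hx, hfl y hy] at h
      exact ZMod.val_injective _ (hinj1 _ _ hx hy h)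
    · exfalso
      rw [hfl x hx, hfr y hy] at h
      have hjy : y.val - (k1-1) < k2 - 1 := by have := hsv y; omega
      rcases hAB _ (f1 _).2 (h ▸ (f2 _).2) with hu' | hv'
      · exact hnu1 _ hx hu'
      · exact hnv2 _ hjy (h ▸ hv')
    · exfalso
      rw [hfr x hx, hfl y hy] at h
      have hjx : x.val - (k1-1) < k2 - 1 := by have := hsv x; omega
      rcases hAB _ (f1 _).2 (h.symm ▸ (f2 _).2) with hu' | hv'
      · exact hnu1 _ hy hu'
      · exact hnv2 _ hjx (h.symm ▸ hv')
    · rw [hfr x hx, hfr y hy] at h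
      have hjx : x.val - (k1-1) < k2 - 1 := by have := hsv x; omega
      have hjy : y.val - (k1-1) < k2 - 1 := by have := hsv y; omega
      have := hinj2 _ _ hjx hjy h
      exact ZMod.val_injective _ (by omega)
  · -- arcs
    intro x
    rcases harcs x with ⟨hx, he⟩ | ⟨hx, he⟩
    · rw [hfl x hx, he]
      exact harc1 _ (hne1 x.val hx)
    · rw [hfr x (by omega), he]
      exact harc2 _ (hne2 _ (by have := hsv x; omega))
  · -- induced
    intro s t hE'
    have hslt := hsv s
    have htlt := hsv t
    by_cases hs : s.val < k1 - 1 <;> by_cases ht : t.val < k1 - 1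
    · rw [hfl s hs, hfl t ht] at hE'
      have h1 := hind1 _ _ hE'
      have h2 : ((t.val : ℕ) : ZMod k1) = ((s.val + 1 : ℕ) : ZMod k1) := by
        push_cast; linear_combination h1
      exact hgoal s t (natCast_inj_of_lt' (by omega) (by omega) h2)
    · rw [hfl s hs, hfr t ht] at hE'
      have hjt : t.val - (k1-1) < k2 - 1 := by omega
      by_cases hv' : (f1 (t1+1+(s.val : ZMod k1)) : V) = v
      · exfalso
        rw [hv', ← ht2v] at hE'
        have h1 := hind2 _ _ hE'
        have h2 : ((t.val - (k1-1) : ℕ) : ZMod k2) = 0 := by linear_combination h1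
        have h3 := natCast_eq_zero_small (by omega) h2
        rw [h3] at hE'
        push_cast at hE'
        rw [add_zero, ht2v] at hE'
        exact hns2 (ht2u ▸ hE')
      · have hu' : (f2 (t2+1+((t.val - (k1-1) : ℕ) : ZMod k2)) : V) = u := by
          by_contra hu'
          exact (hsep _ ⟨(f1 _).2, by rintro (h|h); exacts [hnu1 _ hs h, hv' h]⟩ _
            ⟨(f2 _).2, by rintro (h|h); exacts [hu' h, hnv2 _ hjt h]⟩).1 hE'
        have h3 := hvu2 _ hjt hu'
        rw [hu', ← ht1u] at hE'
        have h1 := hind1 _ _ hE'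
        have h2 : ((s.val + 2 : ℕ) : ZMod k1) = 0 := by push_cast; linear_combination h1.symm
        rw [ZMod.natCast_eq_zero_iff] at h2
        have h4 : s.val + 2 = k1 := by
          have := Nat.le_of_dvd (by omega) h2; omega
        exact hgoal s t (by omega)
    · rw [hfr s hs, hfl t ht] at hE'
      have hjs : s.val - (k1-1) < k2 - 1 := by omega
      by_cases hu' : (f2 (t2+1+((s.val - (k1-1) : ℕ) : ZMod k2)) : V) = u
      · exfalso
        rw [hu', ← ht1u] at hE'
        have h1 := hind1 _ _ hE'
        have h2 : ((t.val : ℕ) : ZMod k1) = 0 := by linear_combination h1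
        have h3 := natCast_eq_zero_small (by omega) h2
        rw [h3] at hE'
        push_cast at hE'
        rw [add_zero, ht1v] at hE'
        exact hns1 (ht1u ▸ hE')
      · have hv' : (f1 (t1+1+(t.val : ZMod k1)) : V) = v := by
          by_contra hv'
          exact (hsep _ ⟨(f1 _).2, by rintro (h|h); exacts [hnu1 _ ht h, hv' h]⟩ _
            ⟨(f2 _).2, by rintro (h|h); exacts [hu' h, hnv2 _ hjs h]⟩).2 hE'
        have h3 := hvv1 _ ht hv'
        rw [hv', ← ht2v] at hE'
        have h1 := hind2 _ _ hE'
        have h2 : ((s.val - (k1-1) + 2 : ℕ) : ZMod k2) = 0 := by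
          push_cast; linear_combination h1.symm
        rw [ZMod.natCast_eq_zero_iff] at h2
        have h4 : s.val - (k1-1) + 2 = k2 := by
          have := Nat.le_of_dvd (by omega) h2; omega
        exact hgoal0 s t (by omega) h3
    · rw [hfr s hs, hfr t ht] at hE'
      have hjs : s.val - (k1-1) < k2 - 1 := by omega
      have hjt : t.val - (k1-1) < k2 - 1 := by omega
      have h1 := hind2 _ _ hE'
      have h2 : ((t.val - (k1-1) : ℕ) : ZMod k2) = ((s.val - (k1-1) + 1 : ℕ) : ZMod k2) := by
        push_cast; linear_combination h1
      have h3 := natCast_inj_of_lt' (by omega) (by omega) h2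
      exact hgoal s t (by omega)
  · -- undominated
    rintro w hw ⟨s, t, hne, hws, hwt⟩
    have hwu : w ≠ u := fun h => hw ⟨_, hfu.trans h.symm⟩
    have hwv : w ≠ v := fun h => hw ⟨0, hfv.trans h.symm⟩
    have hwAB : w ∈ A ∪ B := by rw [hcover]; trivial
    rcases hwAB with hwA | hwB
    · have hw1 : (⟨w, hwA⟩ : A) ∉ Set.range f1 := by
        rintro ⟨σ, hσ⟩
        obtain ⟨x, hx⟩ := hmem1 σ
        exact hw ⟨x, by rw [hx, hσ]⟩
      have key : ∀ x : ZMod k, E w (f x) → ∃ σ : ZMod k1, f x = (f1 σ : V) := by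
        intro x hx
        by_cases hxb : x.val < k1 - 1
        · exact ⟨_, hfl x hxb⟩
        · rw [hfr x hxb] at hx ⊢
          have hjlt : x.val - (k1-1) < k2 - 1 := by have := hsv x; omega
          by_cases h1 : (f2 (t2+1+((x.val - (k1-1) : ℕ) : ZMod k2)) : V) = u
          · exact ⟨t1, by rw [h1, ht1u]⟩
          · by_cases h2 : (f2 (t2+1+((x.val - (k1-1) : ℕ) : ZMod k2)) : V) = v
            · exact ⟨t1+1, by rw [h2, ht1v]⟩
            · exact absurd hx (hsep w ⟨hwA, by rintro (h|h); exacts [hwu h, hwv h]⟩ _ ⟨(f2 _).2, by rintro (h|h); exacts [h1 h, h2 h]⟩).1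
      obtain ⟨σs, hσs⟩ := key s hws
      obtain ⟨σt, hσt⟩ := key t hwt
      refine hd1 ⟨w, hwA⟩ hw1 ⟨σs, σt, ?_, ?_, ?_⟩
      · intro h; exact hne (by rw [hσs, hσt, h])
      · exact (hE1 _ _).2 (Or.inl (hσs ▸ hws))
      · exact (hE1 _ _).2 (Or.inl (hσt ▸ hwt))
    · have hw1 : (⟨w, hwB⟩ : B) ∉ Set.range f2 := by
        rintro ⟨τ, hτ⟩
        obtain ⟨x, hx⟩ := hmem2 τ
        exact hw ⟨x, by rw [hx, hτ]⟩
      have key : ∀ x : ZMod k, E w (f x) → ∃ τ : ZMod k2, f x = (f2 τ : V) := by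
        intro x hx
        by_cases hxb : x.val < k1 - 1
        · rw [hfl x hxb] at hx ⊢
          by_cases h1 : (f1 (t1+1+(x.val : ZMod k1)) : V) = u
          · exact ⟨t2+1, by rw [h1, ht2u]⟩
          · by_cases h2 : (f1 (t1+1+(x.val : ZMod k1)) : V) = v
            · exact ⟨t2, by rw [h2, ht2v]⟩
            · exact absurd hx (hsep _ ⟨(f1 _).2, by rintro (h|h); exacts [h1 h, h2 h]⟩ w ⟨hwB, by rintro (h|h); exacts [hwu h, hwv h]⟩).2
        · exact ⟨_, hfr x hxb⟩
      obtain ⟨τs, hτs⟩ := key s hws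
      obtain ⟨τt, hτt⟩ := key t hwt
      refine hd2 ⟨w, hwB⟩ hw1 ⟨τs, τt, ?_, ?_, ?_⟩
      · intro h; exact hne (by rw [hτs, hτt, h])
      · exact (hE2 _ _).2 (Or.inl (hτs ▸ hws))
      · exact (hE2 _ _).2 (Or.inl (hτt ▸ hwt))
  · -- range equality
    ext y
    simp only [Set.mem_range, Set.mem_union, Set.mem_image]
    constructor
    · rintro ⟨x, rfl⟩
      by_cases hx : x.val < k1 - 1
      · exact Or.inl ⟨f1 _, ⟨_, rfl⟩, (hfl x hx).symm⟩
      · exact Or.inr ⟨f2 _, ⟨_, rfl⟩, (hfr x hx).symm⟩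
    · rintro (⟨a, ⟨σ, rfl⟩, rfl⟩ | ⟨b, ⟨τ, rfl⟩, rfl⟩)
      · exact hmem1 σ
      · exact hmem2 τ
  · -- arc set equality
    ext p
    simp only [Set.mem_union, Set.mem_diff, Set.mem_setOf_eq, Set.mem_singleton_iff]
    constructor
    · rintro ⟨x, rfl⟩
      rcases harcs x with ⟨hx, he⟩ | ⟨hx, he⟩
      · left
        refine ⟨⟨t1+1+(x.val : ZMod k1), by rw [hfl x hx, he]⟩, ?_⟩
        intro hpe
        exact hnu1 x.val hx (by rw [← hfl x hx]; exact congrArg Prod.fst hpe)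
      · right
        refine ⟨⟨t2+1+((x.val - (k1-1) : ℕ) : ZMod k2), by rw [hfr x (by omega), he]⟩, ?_⟩
        intro hpe
        exact hnv2 (x.val - (k1-1)) (by have := hsv x; omega)
          (by rw [← hfr x (by omega)]; exact congrArg Prod.fst hpe)
    · rintro (⟨⟨σ, rfl⟩, hne'⟩ | ⟨⟨τ, rfl⟩, hne'⟩)
      · have hσ : σ ≠ t1 := fun h => hne' (by rw [h, ht1u, ht1v])
        obtain ⟨x, h1, h2⟩ := hmem1' σ hσ
        exact ⟨x, by rw [h1, h2]⟩
      · have hτ : τ ≠ t2 := fun h => hne' (by rw [h, ht2v, ht2u])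
        obtain ⟨x, h1, h2⟩ := hmem2' τ hτ
        exact ⟨x, by rw [h1, h2]⟩
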